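/- Let H be a rigid pseudogroup on a finite set X with maximal element set Λ, and suppose H is the pseudogroup generated by a permutoid (Π; X). Then the map sending each p ∈ Π to its unique maximal extension in H, together with the identity on X, is an extension of permutoids (Π; X) → (Λ; X). -/

import Mathlib

/-- The identity partial permutation of `X`, represented as a graph (a set of pairs). -/
def pid (X : Type*) : Set (X × X) := {xy | xy.1 = xy.2}

/-- The composition `p·q` of two partial permutations (graphs): first apply `q`, then `p`. -/
def pcomp {X : Type*} (p q : Set (X × X)) : Set (X × X) :=
  {xz | ∃ y, (xz.1, y) ∈ q ∧ (y, xz.2) ∈ p}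

/-- The domain of a partial permutation represented as a graph. -/
def pdom {X : Type*} (p : Set (X × X)) : Set X := {x | ∃ y, (x, y) ∈ p}

/-- The range of a partial permutation represented as a graph. -/
def pran {X : Type*} (p : Set (X × X)) : Set X := {y | ∃ x, (x, y) ∈ p}

/-- The inverse of a partial permutation represented as a graph. -/
def pinv {X : Type*} (p : Set (X × X)) : Set (X × X) := {xy | (xy.2, xy.1) ∈ p}

/-- `p` is the graph of a partial permutation: a bijection between two subsets of `X`. -/
def IsPartialPerm {X : Type*} (p : Set (X × X)) : Prop :=
  (∀ x y y', (x, y) ∈ p → (x, y') ∈ p → y = y') ∧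
  (∀ x x' y, (x, y) ∈ p → (x', y) ∈ p → x = x')

/-- A permutoid on `X`: a set of partial permutations (with nonempty domains) of `X`,
containing the identity of `X`, such that any (defined, i.e. nonempty) partial composition
of two members has at most one extension in the set.  Here `q` extends `p` iff `p ⊆ q`
as graphs. -/
structure IsPermutoid {X : Type*} (S : Set (Set (X × X))) : Prop where
  partialPerm : ∀ p ∈ S, IsPartialPerm p
  nonempty : ∀ p ∈ S, p.Nonempty
  id_mem : pid X ∈ S
  unique_ext : ∀ p ∈ S, ∀ q ∈ S, ∀ r ∈ S, ∀ r' ∈ S,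
    (pcomp p q).Nonempty → pcomp p q ⊆ r → pcomp p q ⊆ r' → r = r'

/-- A morphism of permutoids `(φ, Φ) : (S; X) → (S'; X')`. -/
structure IsPermutoidHom {X X' : Type*} (S : Set (Set (X × X))) (S' : Set (Set (X' × X')))
    (φ : Set (X × X) → Set (X' × X')) (Φ : X → X') : Prop where
  maps : ∀ p ∈ S, φ p ∈ S'
  map_id : φ (pid X) = pid X'
  map_rel : ∀ p ∈ S, ∀ x y, (x, y) ∈ p → (Φ x, Φ y) ∈ φ p
  map_comp : ∀ p ∈ S, ∀ q ∈ S, ∀ r ∈ S, (pcomp p q).Nonempty → pcomp p q ⊆ r →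
    pcomp (φ p) (φ q) ⊆ φ r

/-- The permutoid is complete: all its elements are (graphs of) full permutations of `X`. -/
def IsCompletePermutoid {X : Type*} (S : Set (Set (X × X))) : Prop :=
  ∀ p ∈ S, pdom p = Set.univ ∧ pran p = Set.univ

/-- The relators of the universal group of a permutoid: `p q = r` whenever `r ∈ S` extends
the (defined) composition `p·q`. -/
def permutoidRels {X : Type*} (S : Set (Set (X × X))) : Set (FreeGroup ↥S) :=
  {w | ∃ p q r : ↥S, (pcomp p.1 q.1).Nonempty ∧ pcomp p.1 q.1 ⊆ r.1 ∧
    w = FreeGroup.of p * FreeGroup.of q * (FreeGroup.of r)⁻¹}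

/-- The universal group `Γ(S; X)` of a permutoid. -/
abbrev UniversalGroup {X : Type*} (S : Set (Set (X × X))) : Type _ :=
  PresentedGroup (permutoidRels S)

/-- A finite permutoid is developable if it admits a complete finite extension. -/
def Developable {X : Type*} (S : Set (Set (X × X))) : Prop :=
  ∃ (Y : Type) (S' : Set (Set (Y × Y))) (φ : Set (X × X) → Set (Y × Y)) (Φ : X → Y),
    Finite Y ∧ IsPermutoid S' ∧ IsPermutoidHom S S' φ Φ ∧ Function.Injective Φ ∧
    IsCompletePermutoid S'
/-- A pseudogroup of partial bijections of a (finite, discrete) set `X`, with partial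
bijections represented as graphs. -/
structure IsPseudogroup {X : Type*} (H : Set (Set (X × X))) : Prop where
  partialPerm : ∀ h ∈ H, IsPartialPerm h
  id_mem : pid X ∈ H
  inv_mem : ∀ h ∈ H, pinv h ∈ H
  comp_mem : ∀ h ∈ H, ∀ h' ∈ H, pcomp h h' ∈ H
  restr_mem : ∀ h ∈ H, ∀ U : Set X, {xy ∈ h | xy.1 ∈ U} ∈ H
  union_mem : ∀ h ∈ H, ∀ h' ∈ H, IsPartialPerm (h ∪ h') → h ∪ h' ∈ H

/-- A pseudogroup is rigid if whenever two of its elements agree at a point, their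
union also belongs to the pseudogroup. -/
def IsRigidPseudogroup {X : Type*} (H : Set (Set (X × X))) : Prop :=
  IsPseudogroup H ∧ ∀ f ∈ H, ∀ g ∈ H, (f ∩ g).Nonempty → f ∪ g ∈ H

/-- The set of maximal elements of a set of partial permutations. -/
def maxElts {X : Type*} (H : Set (Set (X × X))) : Set (Set (X × X)) :=
  {h ∈ H | ∀ h' ∈ H, h ⊆ h' → h' = h}

/-- The pseudogroup generated by a set of partial permutations: the smallest pseudogroup
containing it (in particular containing all restrictions of its elements). -/
def genPseudogroup {X : Type*} (S : Set (Set (X × X))) : Set (Set (X × X)) :=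
  ⋂₀ {H | IsPseudogroup H ∧ S ⊆ H}

/-- A permutoid is rigid if distinct elements never agree at any point. -/
def IsRigidPermutoid {X : Type*} (S : Set (Set (X × X))) : Prop :=
  IsPermutoid S ∧ ∀ p ∈ S, ∀ q ∈ S, p ≠ q → ∀ a : X × X, a ∈ p → a ∉ q

/-- If a rigid pseudogroup `H` on a finite set `X` is generated by a permutoid `(S; X)`,
then the map sending each `p ∈ S` to its (unique) maximal extension in `H`, together with
the identity map of `X`, is an extension of permutoids `(S; X) → (Λ; X)`, where `Λ` is the
set of maximal elements of `H`. -/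
theorem permutoid_to_maxElts_extension {X : Type*} [Finite X]
    {S H : Set (Set (X × X))} (hS : IsPermutoid S)
    (hH : IsRigidPseudogroup H) (hgen : H = genPseudogroup S) :
    ∃ φ : Set (X × X) → Set (X × X),
      IsPermutoidHom S (maxElts H) φ (id : X → X) ∧
      Function.Injective (id : X → X) ∧
      ∀ p ∈ S, p ⊆ φ p ∧ φ p ∈ maxElts H := by
  classical
  have hSH : S ⊆ H := by
    subst hgen
    intro p hp
    intro H' hH'
    exact hH'.2 hp
  -- every element of H extends to a maximal element
  have hmaxex : ∀ h ∈ H, ∃ m, m ∈ maxElts H ∧ h ⊆ m := by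
    intro h hh
    have hfin : (H ∩ {h' | h ⊆ h'}).Finite := Set.toFinite _
    have hne : (H ∩ {h' | h ⊆ h'}).Nonempty := ⟨h, hh, fun _ ha => ha⟩
    obtain ⟨m, hm, hmx⟩ := Set.Finite.exists_maximalFor id _ hfin hne
    refine ⟨m, ⟨hm.1, ?_⟩, hm.2⟩
    intro h' hh' hsub
    exact Set.Subset.antisymm (hmx ⟨hh', hm.2.trans hsub⟩ hsub) hsub
  -- uniqueness of maximal extensions of a nonempty element
  have huniq : ∀ h : Set (X × X), h.Nonempty → ∀ m ∈ maxElts H, ∀ m' ∈ maxElts H,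
      h ⊆ m → h ⊆ m' → m = m' := by
    intro h hne m hm m' hm' h1 h2
    obtain ⟨a, ha⟩ := hne
    have hu : m ∪ m' ∈ H := hH.2 m hm.1 m' hm'.1 ⟨a, h1 ha, h2 ha⟩
    have e1 := hm.2 (m ∪ m') hu Set.subset_union_left
    have e2 := hm'.2 (m ∪ m') hu Set.subset_union_right
    exact e1.symm.trans e2
  set φ : Set (X × X) → Set (X × X) := fun p => ⋃₀ {m | m ∈ maxElts H ∧ p ⊆ m} with hφdef
  have hφ : ∀ p ∈ H, p.Nonempty → φ p ∈ maxElts H ∧ p ⊆ φ p := by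
    intro p hp hne
    obtain ⟨m, hm, hpm⟩ := hmaxex p hp
    have hset : {m' | m' ∈ maxElts H ∧ p ⊆ m'} = {m} := by
      ext m'
      constructor
      · rintro ⟨h1, h2⟩
        exact huniq p hne m' h1 m hm h2 hpm
      · rintro rfl
        exact ⟨hm, hpm⟩
    have hval : φ p = m := by rw [hφdef]; simp only [hset, Set.sUnion_singleton]
    rw [hval]
    exact ⟨hm, hpm⟩
  -- pid is maximal
  have hpidmax : pid X ∈ maxElts H := by
    refine ⟨hH.1.id_mem, ?_⟩
    intro h hh hsub
    ext ⟨x, y⟩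
    constructor
    · intro hxy
      have hx : (x, x) ∈ h := hsub (show (x, x) ∈ pid X from rfl)
      have := (hH.1.partialPerm h hh).1 x y x hxy hx
      exact this.symm
    · intro hxy
      have : x = y := hxy
      subst this
      exact hsub rfl
  have hmapid : φ (pid X) = pid X := by
    have hset : {m | m ∈ maxElts H ∧ pid X ⊆ m} = {pid X} := by
      ext m
      constructor
      · rintro ⟨h1, h2⟩
        exact hpidmax.2 m h1.1 h2
      · rintro rfl
        exact ⟨hpidmax, subset_rfl⟩
    rw [hφdef]; simp only [hset, Set.sUnion_singleton]
  refine ⟨φ, ⟨?_, hmapid, ?_, ?_⟩, fun a b h => h, ?_⟩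
  · intro p hp
    exact (hφ p (hSH hp) (hS.nonempty p hp)).1
  · intro p hp x y hxy
    exact (hφ p (hSH hp) (hS.nonempty p hp)).2 hxy
  · intro p hp q hq r hr hne hsub
    have hφp := hφ p (hSH hp) (hS.nonempty p hp)
    have hφq := hφ q (hSH hq) (hS.nonempty q hq)
    have hφr := hφ r (hSH hr) (hS.nonempty r hr)
    have hcH : pcomp (φ p) (φ q) ∈ H := hH.1.comp_mem (φ p) hφp.1.1 (φ q) hφq.1.1
    have hmono : pcomp p q ⊆ pcomp (φ p) (φ q) := by
      rintro ⟨x, z⟩ ⟨y, hy1, hy2⟩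
      exact ⟨y, hφq.2 hy1, hφp.2 hy2⟩
    obtain ⟨m, hm, hcm⟩ := hmaxex _ hcH
    have h1 : pcomp p q ⊆ m := hmono.trans hcm
    have h2 : pcomp p q ⊆ φ r := hsub.trans hφr.2
    have heq : m = φ r := huniq _ hne m hm (φ r) hφr.1 h1 h2
    exact heq ▸ hcm
  · intro p hp
    have h := hφ p (hSH hp) (hS.nonempty p hp)
    exact ⟨h.2, h.1⟩
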